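/- Let Ω be a region (nonempty open connected subset) of ℂ and let F : Ω → M_n(ℂ) be analytic. Suppose there is z₀ ∈ Ω such that ‖F(z)‖ ≤ ‖F(z₀)‖ for all z ∈ Ω, where ‖·‖ is the operator norm, and let d = dim{x ∈ ℂⁿ : ‖F(z₀)x‖ = ‖F(z₀)‖·‖x‖}, the dimension of the subspace of vectors at which F(z₀) attains its norm. Then there exist constant n×n unitary matrices U and V such that: if d = n, then F(z) = ‖F(z₀)‖·U·V for all z ∈ Ω; and if d < n, then there is an analytic function R : Ω → M_{n-d}(ℂ) such that F(z) = U · [[‖F(z₀)‖·I_d, 0], [0, R(z)]] · V for all z ∈ Ω. In particular, for every x with ‖F(z₀)x‖ = ‖F(z₀)‖·‖x‖, the map z ↦ F(z)x is constant on Ω and F^{(k)}(z₀)x = 0 for all k ≥ 1. -/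

import Mathlib

open scoped Matrix

/-- The Euclidean norm of a vector in `ℂⁿ`. -/
noncomputable def euclNorm {n : ℕ} (x : Fin n → ℂ) : ℝ :=
  Real.sqrt (∑ i, ‖x i‖ ^ 2)

/-- The operator norm of a complex `n × n` matrix induced by the Euclidean norm on `ℂⁿ`. -/
noncomputable def opNorm {n : ℕ} (A : Matrix (Fin n) (Fin n) ℂ) : ℝ :=
  ‖(Matrix.toEuclideanCLM (𝕜 := ℂ) A : EuclideanSpace ℂ (Fin n) →L[ℂ] EuclideanSpace ℂ (Fin n))‖

/-- `sval A k` is the `(k+1)`-st singular value `s_{k+1}(A)` of `A`: the nonnegative square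
roots of the eigenvalues of `Aᴴ * A`, listed in nonincreasing order.  In particular
`sval A 0 = s₁(A)` is the largest singular value (the operator norm) and
`sval A (n-1) = sₙ(A)` is the smallest. -/
noncomputable def sval {n : ℕ} (A : Matrix (Fin n) (Fin n) ℂ) (k : Fin n) : ℝ :=
  let f : Fin n → ℝ := fun i =>
    Real.sqrt ((Matrix.isHermitian_conjTranspose_mul_self A).eigenvalues i)
  (f ∘ Tuple.sort f) k.rev

/-- The Frobenius (Hilbert--Schmidt) norm of a complex matrix: `‖T‖_F = (trace (Tᴴ T))^{1/2}`. -/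
noncomputable def frobNorm {n : ℕ} (A : Matrix (Fin n) (Fin n) ℂ) : ℝ :=
  Real.sqrt ((Matrix.trace (Aᴴ * A)).re)

attribute [local instance] Matrix.normedAddCommGroup Matrix.normedSpace

open scoped ComplexInnerProductSpace

set_option synthInstance.maxHeartbeats 400000
set_option maxHeartbeats 1000000

namespace MaxNormAux
attribute [local instance] Matrix.normedAddCommGroup Matrix.normedSpace
variable {n : ℕ}

/-- the identification of `Fin n → ℂ` with `EuclideanSpace`. -/
noncomputable def tov {n : ℕ} (x : Fin n → ℂ) : EuclideanSpace ℂ (Fin n) :=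
  (WithLp.equiv 2 (Fin n → ℂ)).symm x

lemma tov_apply (x : Fin n → ℂ) (i : Fin n) : tov x i = x i := rfl

lemma euclNorm_eq (x : Fin n → ℂ) : euclNorm x = ‖tov x‖ := by
  rw [EuclideanSpace.norm_eq]
  rfl

lemma toCLM_tov (A : Matrix (Fin n) (Fin n) ℂ) (x : Fin n → ℂ) :
    Matrix.toEuclideanCLM (𝕜 := ℂ) A (tov x) = tov (A.mulVec x) :=
  Matrix.toEuclideanCLM_toLp A x

lemma euclNorm_mulVec_le (A : Matrix (Fin n) (Fin n) ℂ) (x : Fin n → ℂ) :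
    euclNorm (A.mulVec x) ≤ opNorm A * euclNorm x := by
  rw [euclNorm_eq, euclNorm_eq, ← toCLM_tov]
  exact (Matrix.toEuclideanCLM (𝕜 := ℂ) A).le_opNorm _

lemma euclNorm_star (x : Fin n → ℂ) : euclNorm (star x) = euclNorm x := by
  simp [euclNorm]

lemma opNorm_conjTranspose (A : Matrix (Fin n) (Fin n) ℂ) : opNorm Aᴴ = opNorm A := by
  unfold opNorm
  have h : (Matrix.toEuclideanCLM (𝕜 := ℂ) Aᴴ : EuclideanSpace ℂ (Fin n) →L[ℂ] EuclideanSpace ℂ (Fin n))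
      = ContinuousLinearMap.adjoint (Matrix.toEuclideanCLM (𝕜 := ℂ) A) := by
    rw [← ContinuousLinearMap.star_eq_adjoint]
    exact map_star _ _
  rw [h]
  exact LinearIsometryEquiv.norm_map ContinuousLinearMap.adjoint _

lemma transpose_mulVec_star (A : Matrix (Fin n) (Fin n) ℂ) (y : Fin n → ℂ) :
    Aᵀ.mulVec (star y) = star (Aᴴ.mulVec y) := by
  funext i
  simp [Matrix.mulVec, dotProduct, Matrix.conjTranspose_apply, mul_comm]


lemma euclNorm_transpose_mulVec_le (A : Matrix (Fin n) (Fin n) ℂ) (x : Fin n → ℂ) :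
    euclNorm (Aᵀ.mulVec x) ≤ opNorm A * euclNorm x := by
  calc euclNorm (Aᵀ.mulVec x) = euclNorm (Aᵀ.mulVec (star (star x))) := by simp
    _ = euclNorm (star (Aᴴ.mulVec (star x))) := by rw [transpose_mulVec_star]
    _ = euclNorm (Aᴴ.mulVec (star x)) := euclNorm_star _
    _ ≤ opNorm Aᴴ * euclNorm (star x) := euclNorm_mulVec_le _ _
    _ = opNorm A * euclNorm x := by rw [opNorm_conjTranspose, euclNorm_star]

lemma opNorm_transpose_le (A : Matrix (Fin n) (Fin n) ℂ) : opNorm Aᵀ ≤ opNorm A := by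
  refine ContinuousLinearMap.opNorm_le_bound _ (norm_nonneg _) fun v => ?_
  have hv : v = tov (WithLp.equiv 2 (Fin n → ℂ) v) := rfl
  rw [hv, toCLM_tov, ← euclNorm_eq, ← euclNorm_eq]
  exact euclNorm_transpose_mulVec_le A _

lemma inner_tov (x y : Fin n → ℂ) :
    ⟪tov x, tov y⟫ = ∑ i, starRingEnd ℂ (x i) * y i := by
  simp [PiLp.inner_apply, tov_apply, RCLike.inner_apply]
  exact Finset.sum_congr rfl fun i _ => mul_comm _ _

lemma inner_conjTranspose_mulVec (A : Matrix (Fin n) (Fin n) ℂ) (y x : Fin n → ℂ) :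
    ⟪tov (Aᴴ.mulVec y), tov x⟫ = ⟪tov y, tov (A.mulVec x)⟫ := by
  rw [← toCLM_tov, ← toCLM_tov]
  have h : (Matrix.toEuclideanCLM (𝕜 := ℂ) Aᴴ : EuclideanSpace ℂ (Fin n) →L[ℂ] EuclideanSpace ℂ (Fin n))
      = ContinuousLinearMap.adjoint (Matrix.toEuclideanCLM (𝕜 := ℂ) A) := by
    rw [← ContinuousLinearMap.star_eq_adjoint]
    exact map_star _ _
  rw [h]
  exact ContinuousLinearMap.adjoint_inner_left _ _ _

/-- equality case: if `‖v‖ ≤ M`, `‖w‖ = 1` and `re ⟪v, w⟫ ≥ M` then `v = M • w`. -/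
lemma eq_smul_of_norm_le {V : Type*} [NormedAddCommGroup V] [InnerProductSpace ℂ V]
    {v w : V} {M : ℝ} (hM : 0 ≤ M) (hv : ‖v‖ ≤ M) (hw : ‖w‖ = 1)
    (hre : M ≤ (⟪v, w⟫).re) : v = (M : ℂ) • w := by
  have key : ‖v - (M : ℂ) • w‖ ^ 2 ≤ 0 := by
    have hns := @norm_sub_sq ℂ V _ _ _ v ((M : ℂ) • w)
    have h1 : RCLike.re (⟪v, (M : ℂ) • w⟫) = M * (⟪v, w⟫).re := by
      rw [inner_smul_right]
      simp [RCLike.re_to_complex]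
    have h2 : ‖(M : ℂ) • w‖ = M := by
      rw [norm_smul, hw]
      simp [abs_of_nonneg hM]
    rw [hns, h1, h2]
    nlinarith [mul_le_mul_of_nonneg_left hre hM, mul_le_mul hv hv (norm_nonneg v) hM]
  have := pow_eq_zero_iff (n := 2) (by norm_num) |>.mp
    (le_antisymm key (by positivity))
  rwa [norm_sub_eq_zero_iff] at this


/-- `A ↦ tov (A.mulVec x)` as a continuous linear map. -/
noncomputable def mulVecCLM (x : Fin n → ℂ) :
    Matrix (Fin n) (Fin n) ℂ →L[ℂ] EuclideanSpace ℂ (Fin n) :=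
  LinearMap.toContinuousLinearMap
    { toFun := fun A => tov (A.mulVec x)
      map_add' := fun A B => by
        simp only [Matrix.add_mulVec]
        rfl
      map_smul' := fun c A => by
        simp only [Matrix.smul_mulVec]
        rfl }

lemma mulVecCLM_apply (x : Fin n → ℂ) (A : Matrix (Fin n) (Fin n) ℂ) :
    mulVecCLM x A = tov (A.mulVec x) := rfl

/-- Core maximum-modulus argument. -/
lemma maxmod {Ω : Set ℂ} (hΩ : IsOpen Ω) (hpre : IsPreconnected Ω)
    {G : ℂ → Matrix (Fin n) (Fin n) ℂ} (hG : ∀ z ∈ Ω, DifferentiableAt ℂ G z)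
    {z₀ : ℂ} (hz₀ : z₀ ∈ Ω) {M : ℝ} (hb : ∀ z ∈ Ω, opNorm (G z) ≤ M)
    (x : Fin n → ℂ) (hx : euclNorm ((G z₀).mulVec x) = M * euclNorm x) :
    ∀ z ∈ Ω, (G z).mulVec x = (G z₀).mulVec x := by
  have hdiff : DifferentiableOn ℂ (fun z => mulVecCLM x (G z)) Ω := fun z hz =>
    ((mulVecCLM x).differentiableAt.comp z (hG z hz)).differentiableWithinAt
  have hmax : IsMaxOn (norm ∘ fun z => mulVecCLM x (G z)) Ω z₀ := by
    intro z hz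
    show ‖mulVecCLM x (G z)‖ ≤ ‖mulVecCLM x (G z₀)‖
    rw [mulVecCLM_apply, mulVecCLM_apply, ← euclNorm_eq, ← euclNorm_eq, hx]
    calc euclNorm ((G z).mulVec x) ≤ opNorm (G z) * euclNorm x := euclNorm_mulVec_le _ _
      _ ≤ M * euclNorm x := by
          have h0 : (0:ℝ) ≤ euclNorm x := Real.sqrt_nonneg _
          exact mul_le_mul_of_nonneg_right (hb z hz) h0
  have key := Complex.eqOn_of_isPreconnected_of_isMaxOn_norm hpre hΩ hdiff hz₀ hmax
  intro z hz
  have h2 := key hz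
  simp only [Function.const_apply, mulVecCLM_apply] at h2
  exact (WithLp.equiv 2 (Fin n → ℂ)).symm.injective h2


/-- unit-norm translation -/
lemma euclNorm_withLp (v : EuclideanSpace ℂ (Fin n)) :
    euclNorm (WithLp.equiv 2 (Fin n → ℂ) v) = ‖v‖ := by
  rw [euclNorm_eq]
  rfl

lemma tov_withLp (v : EuclideanSpace ℂ (Fin n)) : tov (WithLp.equiv 2 (Fin n → ℂ) v) = v := rfl

lemma tov_smul (c : ℂ) (x : Fin n → ℂ) : tov (c • x) = c • tov x := rfl

/-- Existence of the adapted orthonormal bases at the maximizing point. -/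
lemma exists_bases {A : Matrix (Fin n) (Fin n) ℂ} {M : ℝ} (hM : 0 < M)
    (hA : opNorm A = M) {S : Submodule ℂ (Fin n → ℂ)}
    (hSn : ∀ x ∈ S, euclNorm (A.mulVec x) = M * euclNorm x)
    {d : ℕ} (hd : d = Module.finrank ℂ S) :
    ∃ b c : OrthonormalBasis (Fin n) ℂ (EuclideanSpace ℂ (Fin n)),
      ∀ i : Fin n, i.val < d →
        A.mulVec (WithLp.equiv 2 (Fin n → ℂ) (b i)) =
          (M : ℂ) • WithLp.equiv 2 (Fin n → ℂ) (c i) ∧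
        Aᴴ.mulVec (WithLp.equiv 2 (Fin n → ℂ) (c i)) =
          (M : ℂ) • WithLp.equiv 2 (Fin n → ℂ) (b i) := by
  classical
  set E := EuclideanSpace ℂ (Fin n)
  set e : (Fin n → ℂ) ≃ₗ[ℂ] E := (WithLp.linearEquiv 2 ℂ (Fin n → ℂ)).symm with he
  set S' : Submodule ℂ E := S.map (e : (Fin n → ℂ) →ₗ[ℂ] E) with hS'
  have hda : d = Module.finrank ℂ S' := by
    rw [hd, LinearEquiv.finrank_map_eq]
  have hmem : ∀ y : S', (WithLp.equiv 2 (Fin n → ℂ)) (y : E) ∈ S := by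
    rintro ⟨y, hy⟩
    obtain ⟨x, hx, rfl⟩ := hy
    exact hx
  have cardEq : Module.finrank ℂ E = Fintype.card (Fin n) := by
    simp [E, finrank_euclideanSpace_fin]
  -- the basis of S', as vectors of E indexed by i < d
  set bS := stdOrthonormalBasis ℂ S' with hbS
  set v : Fin n → E := fun i =>
    if h : i.val < d then (bS (finCongr hda ⟨i.val, h⟩) : E) else 0 with hv
  have hvs : ∀ i : Fin n, ∀ h : i.val < d, v i = (bS (finCongr hda ⟨i.val, h⟩) : E) := by
    intro i h
    simp [hv, h]
  have hOrth : Orthonormal ℂ (Set.restrict {i : Fin n | i.val < d} v) := by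
    rw [orthonormal_iff_ite]
    rintro ⟨i, hi⟩ ⟨j, hj⟩
    change ⟪v i, v j⟫ = _
    rw [hvs i hi, hvs j hj,
      ← Submodule.coe_inner]
    rw [orthonormal_iff_ite.mp bS.orthonormal]
    simp [Fin.ext_iff, Subtype.ext_iff]
  obtain ⟨b, hb⟩ := hOrth.exists_orthonormalBasis_extension_of_card_eq cardEq
  -- the image vectors
  have hbmem : ∀ i : Fin n, i.val < d → (WithLp.equiv 2 (Fin n → ℂ)) (b i) ∈ S := by
    intro i h
    rw [hb i h, hvs i h]
    exact hmem _
  have hbnorm : ∀ i : Fin n, i.val < d →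
      euclNorm (A.mulVec (WithLp.equiv 2 (Fin n → ℂ) (b i))) = M := by
    intro i h
    rw [hSn _ (hbmem i h), euclNorm_withLp, b.orthonormal.1 i, mul_one]
  set w : Fin n → E := fun i =>
    (M⁻¹ : ℂ) • tov (A.mulVec (WithLp.equiv 2 (Fin n → ℂ) (b i))) with hw
  have hwnorm : ∀ i : Fin n, i.val < d → ‖w i‖ = 1 := by
    intro i h
    rw [hw]
    simp only [norm_smul]
    rw [← euclNorm_eq, hbnorm i h]
    simp [abs_of_pos hM, inv_mul_cancel₀ hM.ne']
  have hAw : ∀ i : Fin n, i.val < d →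
      A.mulVec (WithLp.equiv 2 (Fin n → ℂ) (b i)) =
        (M : ℂ) • WithLp.equiv 2 (Fin n → ℂ) (w i) := by
    intro i h
    have : WithLp.equiv 2 (Fin n → ℂ) (w i)
        = (M⁻¹ : ℂ) • A.mulVec (WithLp.equiv 2 (Fin n → ℂ) (b i)) := rfl
    rw [this, smul_smul]
    rw [mul_inv_cancel₀ (by exact_mod_cast hM.ne' : (M:ℂ) ≠ 0), one_smul]
  have hAdj : ∀ i : Fin n, i.val < d →
      Aᴴ.mulVec (WithLp.equiv 2 (Fin n → ℂ) (w i)) =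
        (M : ℂ) • WithLp.equiv 2 (Fin n → ℂ) (b i) := by
    intro i h
    have hkey : tov (Aᴴ.mulVec (WithLp.equiv 2 (Fin n → ℂ) (w i))) = (M : ℂ) • b i := by
      apply eq_smul_of_norm_le hM.le
      · rw [← euclNorm_eq]
        calc euclNorm (Aᴴ.mulVec (WithLp.equiv 2 (Fin n → ℂ) (w i)))
            ≤ opNorm Aᴴ * euclNorm (WithLp.equiv 2 (Fin n → ℂ) (w i)) :=
              euclNorm_mulVec_le _ _
          _ = M := by rw [opNorm_conjTranspose, hA, euclNorm_withLp, hwnorm i h, mul_one]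
      · exact b.orthonormal.1 i
      · have h1 : ⟪tov (Aᴴ.mulVec (WithLp.equiv 2 (Fin n → ℂ) (w i))), (b i : E)⟫
            = ⟪w i, tov (A.mulVec (WithLp.equiv 2 (Fin n → ℂ) (b i)))⟫ := by
          have := inner_conjTranspose_mulVec A (WithLp.equiv 2 (Fin n → ℂ) (w i))
            (WithLp.equiv 2 (Fin n → ℂ) (b i))
          rwa [tov_withLp, tov_withLp] at this
        rw [h1, hAw i h, tov_smul, tov_withLp, inner_smul_right,
          inner_self_eq_norm_sq_to_K, hwnorm i h]
        norm_num
    have := congrArg (WithLp.equiv 2 (Fin n → ℂ)) hkey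
    exact this
  have hwOrth : Orthonormal ℂ (Set.restrict {i : Fin n | i.val < d} w) := by
    rw [orthonormal_iff_ite]
    rintro ⟨i, hi⟩ ⟨j, hj⟩
    change ⟪w i, w j⟫ = _
    have h2 : ⟪w i, w j⟫ = (M⁻¹ : ℂ) * ⟪w i, tov (A.mulVec (WithLp.equiv 2 (Fin n → ℂ) (b j)))⟫ := by
      conv_lhs => rw [hw]
      simp only [inner_smul_right]
      rfl
    have h3 : ⟪w i, tov (A.mulVec (WithLp.equiv 2 (Fin n → ℂ) (b j)))⟫
        = ⟪tov (Aᴴ.mulVec (WithLp.equiv 2 (Fin n → ℂ) (w i))), (b j : E)⟫ := by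
      have := inner_conjTranspose_mulVec A (WithLp.equiv 2 (Fin n → ℂ) (w i))
        (WithLp.equiv 2 (Fin n → ℂ) (b j))
      rw [tov_withLp, tov_withLp] at this
      exact this.symm
    rw [h2, h3, hAdj i hi, tov_smul, tov_withLp, inner_smul_left,
      orthonormal_iff_ite.mp b.orthonormal i j]
    have hij : (⟨i, hi⟩ : {i : Fin n | i.val < d}) = ⟨j, hj⟩ ↔ i = j := by
      simp
    rw [show ((starRingEnd ℂ) (M:ℂ)) = (M:ℂ) by simp]
    by_cases hc : i = j
    · simp [hc, inv_mul_cancel₀ (show (M:ℂ) ≠ 0 by exact_mod_cast hM.ne')]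
    · simp [hc, hij]
  obtain ⟨c, hc⟩ := hwOrth.exists_orthonormalBasis_extension_of_card_eq cardEq
  refine ⟨b, c, fun i h => ?_⟩
  rw [hc i h]
  exact ⟨hAw i h, hAdj i h⟩


/-- matrix whose columns are the vectors of an orthonormal basis -/
noncomputable def basisMatrix (cc : OrthonormalBasis (Fin n) ℂ (EuclideanSpace ℂ (Fin n))) :
    Matrix (Fin n) (Fin n) ℂ :=
  Matrix.of fun i j => (WithLp.equiv 2 (Fin n → ℂ)) (cc j) i

lemma conjTranspose_basisMatrix_mul_self
    (cc : OrthonormalBasis (Fin n) ℂ (EuclideanSpace ℂ (Fin n))) :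
    (basisMatrix cc)ᴴ * basisMatrix cc = 1 := by
  ext a j
  have h := orthonormal_iff_ite.mp cc.orthonormal a j
  rw [PiLp.inner_apply] at h
  simp only [Matrix.mul_apply, Matrix.conjTranspose_apply, basisMatrix, Matrix.of_apply,
    Matrix.one_apply]
  simpa [RCLike.inner_apply, mul_comm] using h

lemma basisMatrix_mul_conjTranspose
    (cc : OrthonormalBasis (Fin n) ℂ (EuclideanSpace ℂ (Fin n))) :
    basisMatrix cc * (basisMatrix cc)ᴴ = 1 :=
  mul_eq_one_comm.mp (conjTranspose_basisMatrix_mul_self cc)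

lemma entry_eq (B : Matrix (Fin n) (Fin n) ℂ)
    (bb cc : OrthonormalBasis (Fin n) ℂ (EuclideanSpace ℂ (Fin n))) (a j : Fin n) :
    ((basisMatrix cc)ᴴ * B * basisMatrix bb) a j
      = ⟪cc a, tov (B.mulVec (WithLp.equiv 2 (Fin n → ℂ) (bb j)))⟫ := by
  simp only [Matrix.mul_apply, Matrix.conjTranspose_apply, basisMatrix, Matrix.of_apply,
    PiLp.inner_apply, tov_apply, Matrix.mulVec, dotProduct, RCLike.inner_apply,
    Finset.sum_mul, Finset.mul_sum]
  rw [Finset.sum_comm]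
  refine Finset.sum_congr rfl fun k _ => Finset.sum_congr rfl fun i _ => ?_
  rw [show star ((WithLp.equiv 2 (Fin n → ℂ)) (cc a) k) = (starRingEnd ℂ) (cc a k) from rfl]
  ring

section derivs
variable {V W : Type*} [NormedAddCommGroup V] [NormedSpace ℂ V]
  [NormedAddCommGroup W] [NormedSpace ℂ W]

lemma iteratedDeriv_zero_fun : ∀ m : ℕ, iteratedDeriv m (fun _ : ℂ => (0 : V)) = fun _ => 0 := by
  intro m
  induction m with
  | zero => simp [iteratedDeriv_zero]
  | succ k ih => rw [iteratedDeriv_succ', deriv_const']; exact ih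

lemma iteratedDeriv_const_fun (m : ℕ) (hm : 1 ≤ m) (c : V) :
    iteratedDeriv m (fun _ : ℂ => c) = fun _ => 0 := by
  obtain ⟨k, rfl⟩ := Nat.exists_eq_add_of_le hm
  rw [Nat.add_comm, iteratedDeriv_succ', deriv_const']
  exact iteratedDeriv_zero_fun k

lemma analyticOnNhd_iteratedDeriv [CompleteSpace V] {Ω : Set ℂ} {f : ℂ → V}
    (hf : AnalyticOnNhd ℂ f Ω) (k : ℕ) :
    AnalyticOnNhd ℂ (iteratedDeriv k f) Ω := by
  induction k with
  | zero => simpa [iteratedDeriv_zero] using hf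
  | succ k ih => rw [iteratedDeriv_succ]; exact ih.deriv

lemma clm_iteratedDeriv_comm [CompleteSpace V] (L : V →L[ℂ] W) {Ω : Set ℂ} (hΩ : IsOpen Ω)
    {f : ℂ → V} (hf : AnalyticOnNhd ℂ f Ω) (k : ℕ) :
    ∀ z ∈ Ω, iteratedDeriv k (fun w => L (f w)) z = L (iteratedDeriv k f z) := by
  induction k with
  | zero => intro z hz; simp [iteratedDeriv_zero]
  | succ k ih =>
    intro z hz
    rw [iteratedDeriv_succ, iteratedDeriv_succ]
    have hev : (iteratedDeriv k fun w => L (f w)) =ᶠ[nhds z] fun w => L (iteratedDeriv k f w) := by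
      filter_upwards [hΩ.mem_nhds hz] with w hw using ih w hw
    rw [hev.deriv_eq]
    have hdiff : DifferentiableAt ℂ (iteratedDeriv k f) z :=
      ((analyticOnNhd_iteratedDeriv hf k) z hz).differentiableAt
    exact (L.hasFDerivAt.comp_hasDerivAt z hdiff.hasDerivAt).deriv

end derivs


lemma euclNorm_smul (r : ℝ) (hr : 0 ≤ r) (x : Fin n → ℂ) :
    euclNorm ((r : ℂ) • x) = r * euclNorm x := by
  rw [euclNorm_eq, euclNorm_eq, tov_smul, norm_smul]
  simp [abs_of_nonneg hr]

/-- transpose as a continuous linear map -/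
noncomputable def transposeCLM : Matrix (Fin n) (Fin n) ℂ →L[ℂ] Matrix (Fin n) (Fin n) ℂ :=
  LinearMap.toContinuousLinearMap
    { toFun := fun A => Aᵀ
      map_add' := fun A B => Matrix.transpose_add A B
      map_smul' := fun c A => Matrix.transpose_smul c A }

lemma transposeCLM_apply (A : Matrix (Fin n) (Fin n) ℂ) : transposeCLM A = Aᵀ := rfl

end MaxNormAux

open MaxNormAux

/-- If `F` is analytic on a region `Ω` and its operator norm attains its maximum at `z₀ ∈ Ω`,
let `d` be the dimension of the subspace `S = {x : ‖F z₀ x‖ = ‖F z₀‖ ⬝ ‖x‖}` of maximizing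
vectors.  Then there are constant unitary `U`, `V` with `F z = ‖F z₀‖ • (U * V)` when `d = n`,
and `F z = U * [[‖F z₀‖ • I_d, 0], [0, R z]] * V` for some analytic
`R : Ω → M_{n-d}(ℂ)` when `d < n`.  In particular, for every maximizing vector `x`, the map
`z ↦ F z x` is constant on `Ω` and `F⁽ᵏ⁾(z₀) x = 0` for all `k ≥ 1`. -/
theorem maximum_operator_norm_full_factorization {n : ℕ} (Ω : Set ℂ) (hΩ : IsOpen Ω)
    (hconn : IsConnected Ω) (F : ℂ → Matrix (Fin n) (Fin n) ℂ)
    (hF : ∀ z ∈ Ω, DifferentiableAt ℂ F z) (z₀ : ℂ) (hz₀ : z₀ ∈ Ω)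
    (hmax : ∀ z ∈ Ω, opNorm (F z) ≤ opNorm (F z₀))
    (S : Submodule ℂ (Fin n → ℂ))
    (hS : (S : Set (Fin n → ℂ)) =
      {x | euclNorm ((F z₀).mulVec x) = opNorm (F z₀) * euclNorm x})
    (d : ℕ) (hd : d = Module.finrank ℂ S) :
    (∃ U V : Matrix (Fin n) (Fin n) ℂ,
      Uᴴ * U = 1 ∧ U * Uᴴ = 1 ∧ Vᴴ * V = 1 ∧ V * Vᴴ = 1 ∧
      (d = n → ∀ z ∈ Ω, F z = (opNorm (F z₀) : ℂ) • (U * V)) ∧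
      (∀ hlt : d < n, ∃ R : ℂ → Matrix (Fin (n - d)) (Fin (n - d)) ℂ,
        (∀ z ∈ Ω, DifferentiableAt ℂ R z) ∧
        ∀ z ∈ Ω,
          F z = U * (Matrix.reindex
            (finSumFinEquiv.trans (finCongr (Nat.add_sub_cancel' hlt.le)))
            (finSumFinEquiv.trans (finCongr (Nat.add_sub_cancel' hlt.le)))
            (Matrix.fromBlocks (Matrix.diagonal fun _ : Fin d => (opNorm (F z₀) : ℂ))
              0 0 (R z))) * V)) ∧
    ∀ x : Fin n → ℂ, euclNorm ((F z₀).mulVec x) = opNorm (F z₀) * euclNorm x →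
      (∀ z ∈ Ω, (F z).mulVec x = (F z₀).mulVec x) ∧
      ∀ k : ℕ, 1 ≤ k → (iteratedDeriv k F z₀).mulVec x = 0 := by
  classical
  set M := opNorm (F z₀) with hMdef
  have hconst : ∀ x : Fin n → ℂ, euclNorm ((F z₀).mulVec x) = M * euclNorm x →
      ∀ z ∈ Ω, (F z).mulVec x = (F z₀).mulVec x :=
    fun x hx => maxmod hΩ hconn.isPreconnected hF hz₀ hmax x hx
  have hpart2 : ∀ x : Fin n → ℂ, euclNorm ((F z₀).mulVec x) = M * euclNorm x →
      (∀ z ∈ Ω, (F z).mulVec x = (F z₀).mulVec x) ∧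
      ∀ k : ℕ, 1 ≤ k → (iteratedDeriv k F z₀).mulVec x = 0 := by
    intro x hx
    refine ⟨hconst x hx, fun k hk => ?_⟩
    have hdo : DifferentiableOn ℂ F Ω := fun z hz => (hF z hz).differentiableWithinAt
    have hFa : AnalyticOnNhd ℂ F Ω := hdo.analyticOnNhd hΩ
    have hcomm := clm_iteratedDeriv_comm (mulVecCLM x) hΩ hFa k z₀ hz₀
    have hev : (fun w => mulVecCLM x (F w)) =ᶠ[nhds z₀]
        (fun _ => tov ((F z₀).mulVec x)) := by
      filter_upwards [hΩ.mem_nhds hz₀] with w hw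
      rw [mulVecCLM_apply, hconst x hx w hw]
    have h0 : iteratedDeriv k (fun w => mulVecCLM x (F w)) z₀ = 0 := by
      rw [hev.iteratedDeriv_eq, iteratedDeriv_const_fun k hk]
    have hz : tov ((iteratedDeriv k F z₀).mulVec x) = 0 := by
      rw [← mulVecCLM_apply]
      exact hcomm.symm.trans h0
    have h2 := congrArg (WithLp.equiv 2 (Fin n → ℂ)) hz
    exact h2
  refine ⟨?_, hpart2⟩
  by_cases hM0 : M ≤ 0
  · -- degenerate case ‖F z₀‖ = 0, so F ≡ 0 on Ω
    have hMeq : M = 0 := le_antisymm hM0 (norm_nonneg _)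
    have hF0 : ∀ z ∈ Ω, F z = 0 := by
      intro z hz
      have h1 : ‖(Matrix.toEuclideanCLM (𝕜 := ℂ) (F z) :
          EuclideanSpace ℂ (Fin n) →L[ℂ] EuclideanSpace ℂ (Fin n))‖ = 0 :=
        le_antisymm ((hmax z hz).trans (le_of_eq hMeq)) (norm_nonneg _)
      have h2 : (Matrix.toEuclideanCLM (𝕜 := ℂ) (F z)) = 0 := norm_eq_zero.mp h1
      have h3 := (Matrix.toEuclideanCLM (𝕜 := ℂ)).injective
        (h2.trans (map_zero (Matrix.toEuclideanCLM (𝕜 := ℂ))).symm)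
      exact h3
    refine ⟨1, 1, by simp, by simp, by simp, by simp, ?_, ?_⟩
    · intro _ z hz
      rw [hF0 z hz, hMeq]
      simp
    · intro hlt
      refine ⟨fun _ => 0, fun z hz => differentiableAt_const _, fun z hz => ?_⟩
      rw [hF0 z hz, hMeq]
      simp
  · have hMpos : 0 < M := not_le.mp hM0
    have hSn : ∀ x ∈ S, euclNorm ((F z₀).mulVec x) = M * euclNorm x := by
      intro x hxS
      have hx : x ∈ (S : Set (Fin n → ℂ)) := hxS
      rw [hS] at hx
      exact hx
    obtain ⟨b, c, hbc⟩ := exists_bases hMpos rfl hSn hd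
    set P := basisMatrix b with hPdef
    set U := basisMatrix c with hUdef
    have hPu : Pᴴ * P = 1 := conjTranspose_basisMatrix_mul_self b
    have hPu' : P * Pᴴ = 1 := basisMatrix_mul_conjTranspose b
    have hUu : Uᴴ * U = 1 := conjTranspose_basisMatrix_mul_self c
    have hUu' : U * Uᴴ = 1 := basisMatrix_mul_conjTranspose c
    -- column facts
    have hcol : ∀ z ∈ Ω, ∀ i : Fin n, i.val < d →
        (F z).mulVec (WithLp.equiv 2 (Fin n → ℂ) (b i)) =
          (M : ℂ) • WithLp.equiv 2 (Fin n → ℂ) (c i) := by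
      intro z hz i h
      have hx : euclNorm ((F z₀).mulVec (WithLp.equiv 2 (Fin n → ℂ) (b i))) =
          M * euclNorm (WithLp.equiv 2 (Fin n → ℂ) (b i)) := by
        rw [(hbc i h).1, euclNorm_smul M hMpos.le, euclNorm_withLp, euclNorm_withLp,
          b.orthonormal.1 i, c.orthonormal.1 i]
      rw [hconst _ hx z hz, (hbc i h).1]
    -- row facts
    have hrow : ∀ z ∈ Ω, ∀ i : Fin n, i.val < d →
        (F z)ᴴ.mulVec (WithLp.equiv 2 (Fin n → ℂ) (c i)) =
          (M : ℂ) • WithLp.equiv 2 (Fin n → ℂ) (b i) := by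
      intro z hz i h
      have hFt : ∀ w ∈ Ω, DifferentiableAt ℂ (fun w => (F w)ᵀ) w := fun w hw =>
        (transposeCLM.differentiableAt).comp w (hF w hw)
      have hbt : ∀ w ∈ Ω, opNorm ((F w)ᵀ) ≤ M := fun w hw =>
        (opNorm_transpose_le (F w)).trans (hmax w hw)
      have hx : euclNorm ((F z₀)ᵀ.mulVec (star (WithLp.equiv 2 (Fin n → ℂ) (c i)))) =
          M * euclNorm (star (WithLp.equiv 2 (Fin n → ℂ) (c i))) := by
        rw [transpose_mulVec_star, (hbc i h).2, euclNorm_star, euclNorm_star,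
          euclNorm_smul M hMpos.le, euclNorm_withLp, euclNorm_withLp,
          b.orthonormal.1 i, c.orthonormal.1 i]
      have hcst := maxmod hΩ hconn.isPreconnected hFt hz₀ hbt _ hx z hz
      rw [transpose_mulVec_star, transpose_mulVec_star, (hbc i h).2] at hcst
      exact star_injective hcst
    -- entries of the compressed matrix
    have hK1 : ∀ z ∈ Ω, ∀ a j : Fin n, j.val < d →
        (Uᴴ * F z * P) a j = if a = j then (M : ℂ) else 0 := by
      intro z hz a j h
      rw [entry_eq, hcol z hz j h, tov_smul, tov_withLp, inner_smul_right,
        orthonormal_iff_ite.mp c.orthonormal a j]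
      by_cases hc : a = j <;> simp [hc]
    have hK2 : ∀ z ∈ Ω, ∀ a j : Fin n, a.val < d →
        (Uᴴ * F z * P) a j = if a = j then (M : ℂ) else 0 := by
      intro z hz a j h
      rw [entry_eq]
      have h1 := inner_conjTranspose_mulVec (F z) (WithLp.equiv 2 (Fin n → ℂ) (c a))
        (WithLp.equiv 2 (Fin n → ℂ) (b j))
      rw [tov_withLp, tov_withLp] at h1
      rw [← h1, hrow z hz a h, tov_smul, tov_withLp, inner_smul_left,
        orthonormal_iff_ite.mp b.orthonormal a j]
      rw [show ((starRingEnd ℂ) (M : ℂ)) = (M : ℂ) by simp]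
      by_cases hc : a = j <;> simp [hc]
    -- reconstruction
    have hfact : ∀ z ∈ Ω, F z = U * (Uᴴ * F z * P) * Pᴴ := by
      intro z hz
      rw [Matrix.mul_assoc Uᴴ (F z) P, Matrix.mul_assoc U, Matrix.mul_assoc (Uᴴ),
        Matrix.mul_assoc (F z), hPu', Matrix.mul_one, ← Matrix.mul_assoc,
        hUu', Matrix.one_mul]
    refine ⟨U, Pᴴ, hUu, hUu', by rwa [Matrix.conjTranspose_conjTranspose],
      by rwa [Matrix.conjTranspose_conjTranspose], ?_, ?_⟩
    · -- d = n case
      intro hdn z hz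
      have hKid : Uᴴ * F z * P = (M : ℂ) • (1 : Matrix (Fin n) (Fin n) ℂ) := by
        ext a j
        rw [hK2 z hz a j (hdn ▸ a.isLt), Matrix.smul_apply, Matrix.one_apply]
        by_cases hc : a = j <;> simp [hc]
      rw [hfact z hz, hKid]
      rw [Matrix.mul_smul, Matrix.smul_mul, Matrix.mul_one]
    · -- d < n case
      intro hlt
      set eqv : Fin d ⊕ Fin (n - d) ≃ Fin n :=
        finSumFinEquiv.trans (finCongr (Nat.add_sub_cancel' hlt.le)) with heqv
      have heqvl : ∀ i : Fin d, (eqv (Sum.inl i)).val = i.val := by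
        intro i
        simp [heqv, finSumFinEquiv_apply_left]
      have heqvr : ∀ i : Fin (n - d), (eqv (Sum.inr i)).val = d + i.val := by
        intro i
        simp [heqv, finSumFinEquiv_apply_right]
      -- the analytic lower-right block
      set RL : Matrix (Fin n) (Fin n) ℂ →ₗ[ℂ] Matrix (Fin (n - d)) (Fin (n - d)) ℂ :=
        { toFun := fun A => Matrix.of fun i j : Fin (n - d) =>
            (Uᴴ * A * P) (eqv (Sum.inr i)) (eqv (Sum.inr j))
          map_add' := fun A B => by
            ext i j
            simp [Matrix.mul_add, Matrix.add_mul]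
          map_smul' := fun r A => by
            ext i j
            simp [Matrix.mul_smul, Matrix.smul_mul] } with hRL
      refine ⟨fun z => RL (F z), fun z hz =>
        (RL.toContinuousLinearMap.differentiableAt).comp z (hF z hz), ?_⟩
      intro z hz
      have hblocks : Matrix.reindex eqv eqv
          (Matrix.fromBlocks (Matrix.diagonal fun _ : Fin d => (M : ℂ)) 0 0 (RL (F z)))
          = Uᴴ * F z * P := by
        ext a bcol
        obtain ⟨a', rfl⟩ : ∃ a', eqv a' = a := ⟨eqv.symm a, by simp⟩
        obtain ⟨b', rfl⟩ : ∃ b', eqv b' = bcol := ⟨eqv.symm bcol, by simp⟩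
        rw [Matrix.reindex_apply, Matrix.submatrix_apply, Equiv.symm_apply_apply,
          Equiv.symm_apply_apply]
        cases a' with
        | inl i =>
          have ha : (eqv (Sum.inl i)).val < d := by rw [heqvl]; exact i.isLt
          cases b' with
          | inl j =>
            rw [hK2 z hz _ _ ha, Matrix.fromBlocks_apply₁₁, Matrix.diagonal_apply]
            have : (eqv (Sum.inl i) = eqv (Sum.inl j)) ↔ i = j := by
              rw [eqv.apply_eq_iff_eq, Sum.inl.injEq]
            by_cases hc : i = j <;> simp [hc, this]
          | inr j =>
            rw [hK2 z hz _ _ ha, Matrix.fromBlocks_apply₁₂]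
            have : ¬(eqv (Sum.inl i) = eqv (Sum.inr j)) := by
              rw [eqv.apply_eq_iff_eq]
              simp
            simp [this]
        | inr i =>
          cases b' with
          | inl j =>
            have hb : (eqv (Sum.inl j)).val < d := by rw [heqvl]; exact j.isLt
            rw [hK1 z hz _ _ hb, Matrix.fromBlocks_apply₂₁]
            have : ¬(eqv (Sum.inr i) = eqv (Sum.inl j)) := by
              rw [eqv.apply_eq_iff_eq]
              simp
            simp [this]
          | inr j =>
            rw [Matrix.fromBlocks_apply₂₂]
            rfl
      rw [hblocks]
      exact hfact z hz
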